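/- Along the AdaBoost flow with fixed vector a (so Hₜ(k) evolves with yₖ·H'ₜ(xₖ) = aₖ and wₜ(k) = w₀(k)e^{-t·aₖ}/Z(t)), one has for all 0 ≤ p < t: log E(Hₜ, w_p) - log E(H_p, wₜ) = -∫_p^t σ_s ds, where E(H, w) = ∑ₖ wₖ·e^{-yₖ·H(xₖ)} and σ_s = ∑ₖ aₖ·w_s(k). -/

import Mathlib

theorem stmt8 (m : ℕ) (a y w0 : Fin m → ℝ) (hw0 : ∀ k, 0 ≤ w0 k) (hw0sum : ∑ k, w0 k = 1)
    (w : ℝ → Fin m → ℝ)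
    (hw : ∀ t k, w t k = w0 k * Real.exp (-t * a k) / ∑ p, w0 p * Real.exp (-t * a p))
    (H : ℝ → Fin m → ℝ)
    (hH : ∀ t k, HasDerivAt (fun s => y k * H s k) (a k) t)
    (E : (Fin m → ℝ) → (Fin m → ℝ) → ℝ)
    (hE : ∀ G v, E G v = ∑ k, v k * Real.exp (-(y k * G k)))
    (σ : ℝ → ℝ) (hσ : ∀ s, σ s = ∑ k, a k * w s k) :
    ∀ p t : ℝ, 0 ≤ p → p < t →
      Real.log (E (H t) (w p)) - Real.log (E (H p) (w t)) = -∫ s in p..t, σ s := by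
  intro p t hp hpt
  set Z : ℝ → ℝ := fun s => ∑ j, w0 j * Real.exp (-s * a j) with hZ
  set N : ℝ → ℝ := fun s => ∑ j, a j * w0 j * Real.exp (-s * a j) with hN
  -- existence of a positive weight
  obtain ⟨k0, hk0⟩ : ∃ k, 0 < w0 k := by
    by_contra h
    push_neg at h
    have : (∑ k, w0 k) ≤ 0 := Finset.sum_nonpos fun k _ => h k
    rw [hw0sum] at this; linarith
  have hZpos : ∀ s, 0 < Z s := by
    intro s
    apply Finset.sum_pos' (fun j _ => mul_nonneg (hw0 j) (Real.exp_pos _).le)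
    exact ⟨k0, Finset.mem_univ _, mul_pos hk0 (Real.exp_pos _)⟩
  have hZd : ∀ s, HasDerivAt Z (-N s) s := by
    intro s
    have : HasDerivAt Z (∑ j, w0 j * (Real.exp (-s * a j) * (-1 * a j))) s := by
      apply HasDerivAt.fun_sum
      intro j _
      exact (((hasDerivAt_id s).neg.mul_const (a j)).exp).const_mul (w0 j)
    convert this using 1
    rw [hN]
    simp only [← Finset.sum_neg_distrib]
    apply Finset.sum_congr rfl
    intro j _; ring
  have hZs : ∀ s, (∑ j, w0 j * Real.exp (-s * a j)) = Z s := fun s => rfl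
  have hσ' : ∀ s, σ s = N s / Z s := by
    intro s
    rw [hσ, hN, Finset.sum_div]
    apply Finset.sum_congr rfl
    intro j _
    rw [hw, hZs]
    ring
  have hlogd : ∀ s, HasDerivAt (fun u => Real.log (Z u)) (-σ s) s := by
    intro s
    have := (hZd s).log (ne_of_gt (hZpos s))
    rw [hσ']
    convert this using 1
    field_simp
  -- continuity / integrability of σ
  have hσcont : Continuous σ := by
    have hNc : Continuous N := by
      apply continuous_finset_sum
      intro j _
      exact continuous_const.mul (Real.continuous_exp.comp (continuous_id.neg.mul continuous_const))
    have hZc : Continuous Z := by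
      apply continuous_finset_sum
      intro j _
      exact continuous_const.mul (Real.continuous_exp.comp (continuous_id.neg.mul continuous_const))
    have : Continuous fun s => N s / Z s := hNc.div hZc fun s => ne_of_gt (hZpos s)
    exact this.congr fun s => (hσ' s).symm
  have hint : ∫ s in p..t, -σ s = Real.log (Z t) - Real.log (Z p) :=
    intervalIntegral.integral_eq_sub_of_hasDerivAt (fun x _ => hlogd x)
      (hσcont.neg.intervalIntegrable p t)
  -- affine structure of the margins
  have hHtp : ∀ k, y k * H t k = y k * H p k + (t - p) * a k := by
    intro k
    have hf : ∀ s, HasDerivAt (fun u => y k * H u k - u * a k) 0 s := by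
      intro s
      simpa using (hH s k).fun_sub ((hasDerivAt_id s).mul_const (a k))
    have hc := is_const_of_deriv_eq_zero (fun s => (hf s).differentiableAt)
      (fun s => (hf s).deriv) t p
    linarith
  set S : ℝ := ∑ k, w0 k * Real.exp (-t * a k) * Real.exp (-(y k * H p k)) with hS
  have hSpos : 0 < S := by
    apply Finset.sum_pos' (fun j _ => mul_nonneg (mul_nonneg (hw0 j) (Real.exp_pos _).le)
      (Real.exp_pos _).le)
    exact ⟨k0, Finset.mem_univ _,
      mul_pos (mul_pos hk0 (Real.exp_pos _)) (Real.exp_pos _)⟩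
  have hEt : E (H t) (w p) = S / Z p := by
    rw [hE, hS, Finset.sum_div]
    apply Finset.sum_congr rfl
    intro k _
    rw [hw, hZs]
    have h1 : Real.exp (-p * a k) * Real.exp (-(y k * H t k)) =
        Real.exp (-t * a k) * Real.exp (-(y k * H p k)) := by
      rw [← Real.exp_add, ← Real.exp_add, hHtp k]
      congr 1; ring
    rw [div_mul_eq_mul_div, mul_assoc, h1, ← mul_assoc]
  have hEp : E (H p) (w t) = S / Z t := by
    rw [hE, hS, Finset.sum_div]
    apply Finset.sum_congr rfl
    intro k _
    rw [hw, hZs]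
    rw [div_mul_eq_mul_div]
  rw [hEt, hEp, Real.log_div (ne_of_gt hSpos) (ne_of_gt (hZpos p)),
    Real.log_div (ne_of_gt hSpos) (ne_of_gt (hZpos t)),
    ← intervalIntegral.integral_neg, hint]
  ring
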